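/- Let n₂ : U → ℝ³ be a twice continuously differentiable unit vector field on an open set U ⊆ ℝ³ which is part of a C² orthonormal frame field (n₁,n₂,n₃), and define D₁₁ = n₁ᵢ n₂ⱼ ∂ᵢ n₃ⱼ, D₃₃ = n₃ᵢ n₁ⱼ ∂ᵢ n₂ⱼ, D₃₁ = n₃ᵢ n₂ⱼ ∂ᵢ n₃ⱼ, D₁₃ = n₁ᵢ n₁ⱼ ∂ᵢ n₂ⱼ (with summation over repeated indices). Then ∂ᵢ n₂ᵢ ∂ⱼ n₂ⱼ − ∂ᵢ n₂ⱼ ∂ⱼ n₂ᵢ = 2(D₃₃D₁₁ − D₃₁D₁₃). -/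

import Mathlib

open Matrix

/-- The partial derivative ∂ᵢ of the j-th component of the μ-th frame vector at x. -/
noncomputable def pder (n : Fin 3 → (Fin 3 → ℝ) → (Fin 3 → ℝ)) (x : Fin 3 → ℝ)
    (i μ j : Fin 3) : ℝ :=
  fderiv ℝ (fun y => n μ y j) x (Pi.single i (1:ℝ))

/-- The surface term identity
    ∂ᵢn₂ᵢ∂ⱼn₂ⱼ − ∂ᵢn₂ⱼ∂ⱼn₂ᵢ = 2(D₃₃D₁₁ − D₃₁D₁₃)
    for a C² right-handed orthonormal frame field (n₁,n₂,n₃). -/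
theorem surface_term_identity (U : Set (Fin 3 → ℝ)) (hU : IsOpen U)
    (n : Fin 3 → (Fin 3 → ℝ) → (Fin 3 → ℝ))
    (horth : ∀ y ∈ U, ∀ μ ν : Fin 3,
      (∑ j : Fin 3, n μ y j * n ν y j) = if μ = ν then 1 else 0)
    (hright : ∀ y ∈ U, (Matrix.of fun i j : Fin 3 => n i y j).det = 1)
    (hsmooth : ∀ μ j : Fin 3, ContDiffOn ℝ 2 (fun y => n μ y j) U)
    (x : Fin 3 → ℝ) (hx : x ∈ U) :
    (∑ i : Fin 3, pder n x i 1 i) * (∑ j : Fin 3, pder n x j 1 j)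
      - ∑ i : Fin 3, ∑ j : Fin 3, pder n x i 1 j * pder n x j 1 i
    = 2 * ((∑ i : Fin 3, ∑ j : Fin 3, n 2 x i * n 0 x j * pder n x i 1 j)
            * (∑ i : Fin 3, ∑ j : Fin 3, n 0 x i * n 1 x j * pder n x i 2 j)
          - (∑ i : Fin 3, ∑ j : Fin 3, n 2 x i * n 1 x j * pder n x i 2 j)
            * (∑ i : Fin 3, ∑ j : Fin 3, n 0 x i * n 0 x j * pder n x i 1 j)) := by
  have hdiff : ∀ μ j : Fin 3, DifferentiableAt ℝ (fun y => n μ y j) x := fun μ j =>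
    ((hsmooth μ j).differentiableOn (by norm_num)).differentiableAt (hU.mem_nhds hx)
  -- differentiating orthonormality
  have key : ∀ i μ ν : Fin 3,
      (∑ j : Fin 3, (n μ x j * pder n x i ν j + n ν x j * pder n x i μ j)) = 0 := by
    intro i μ ν
    have hder : HasFDerivAt (fun y => ∑ j : Fin 3, n μ y j * n ν y j)
        (∑ j : Fin 3, (n μ x j • fderiv ℝ (fun y => n ν y j) x
            + n ν x j • fderiv ℝ (fun y => n μ y j) x)) x :=
      HasFDerivAt.fun_sum fun j _ => ((hdiff μ j).hasFDerivAt.mul (hdiff ν j).hasFDerivAt)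
    have hconst : fderiv ℝ (fun y => ∑ j : Fin 3, n μ y j * n ν y j) x = 0 := by
      have hev : (fun y => ∑ j : Fin 3, n μ y j * n ν y j)
          =ᶠ[nhds x] (fun _ => if μ = ν then (1:ℝ) else 0) :=
        Filter.eventuallyEq_of_mem (hU.mem_nhds hx) (fun y hy => horth y hy μ ν)
      rw [hev.fderiv_eq]
      exact fderiv_const_apply _
    have h0 := hder.fderiv
    rw [hconst] at h0
    have h1 : (∑ j : Fin 3, (n μ x j • fderiv ℝ (fun y => n ν y j) x
        + n ν x j • fderiv ℝ (fun y => n μ y j) x)) (Pi.single i (1:ℝ)) = 0 := by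
      rw [← h0]; rfl
    simpa [pder, ContinuousLinearMap.sum_apply, ContinuousLinearMap.add_apply,
      ContinuousLinearMap.smul_apply, smul_eq_mul] using h1
  have hBsum : ∀ l μ ν : Fin 3,
      (∑ i : Fin 3, ∑ j : Fin 3, n l x i * n ν x j * pder n x i μ j)
        + (∑ i : Fin 3, ∑ j : Fin 3, n l x i * n μ x j * pder n x i ν j) = 0 := by
    intro l μ ν
    rw [← Finset.sum_add_distrib]
    refine Finset.sum_eq_zero fun i _ => ?_
    rw [← Finset.sum_add_distrib]
    calc (∑ j : Fin 3, (n l x i * n ν x j * pder n x i μ j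
            + n l x i * n μ x j * pder n x i ν j))
        = ∑ j : Fin 3, n l x i * (n μ x j * pder n x i ν j + n ν x j * pder n x i μ j) := by
          refine Finset.sum_congr rfl fun j _ => by ring
      _ = n l x i * ∑ j : Fin 3, (n μ x j * pder n x i ν j + n ν x j * pder n x i μ j) :=
          (Finset.mul_sum _ _ _).symm
      _ = 0 := by rw [key i μ ν, mul_zero]
  -- the frame matrix and its orthogonality
  set N : Matrix (Fin 3) (Fin 3) ℝ := Matrix.of fun μ j => n μ x j with hNdef
  have hNN : N * Nᵀ = 1 := by
    ext μ ν
    simpa [N, Matrix.mul_apply, Matrix.one_apply] using horth x hx μ ν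
  have hNTN : Nᵀ * N = 1 := mul_eq_one_comm.mp hNN
  set M1 : Matrix (Fin 3) (Fin 3) ℝ := Matrix.of fun i j => pder n x i 1 j with hM1def
  set M2 : Matrix (Fin 3) (Fin 3) ℝ := Matrix.of fun i j => pder n x i 2 j with hM2def
  have hBentry : ∀ (M : Matrix (Fin 3) (Fin 3) ℝ) (l ρ : Fin 3),
      (N * M * Nᵀ) l ρ = ∑ i : Fin 3, ∑ j : Fin 3, n l x i * n ρ x j * M i j := by
    intro M l ρ
    simp only [Matrix.mul_apply, Matrix.transpose_apply, Finset.sum_mul, N, Matrix.of_apply]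
    rw [Finset.sum_comm]
    exact Finset.sum_congr rfl fun i _ => Finset.sum_congr rfl fun j _ => by ring
  -- trace identities
  have t1 : Matrix.trace M1 = Matrix.trace (N * M1 * Nᵀ) := by
    rw [Matrix.trace_mul_cycle, hNTN, Matrix.one_mul]
  have t2 : Matrix.trace (M1 * M1) = Matrix.trace ((N * M1 * Nᵀ) * (N * M1 * Nᵀ)) := by
    have : (N * M1 * Nᵀ) * (N * M1 * Nᵀ) = N * (M1 * M1) * Nᵀ := by
      rw [show (N * M1 * Nᵀ) * (N * M1 * Nᵀ) = N * M1 * (Nᵀ * N) * M1 * Nᵀ by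
        simp only [Matrix.mul_assoc], hNTN]
      simp only [Matrix.mul_one, Matrix.mul_assoc]
    rw [this, Matrix.trace_mul_cycle, hNTN, Matrix.one_mul]
  -- antisymmetry facts at the level of conjugated matrices
  have z : ∀ l : Fin 3, (N * M1 * Nᵀ) l 1 = 0 := by
    intro l
    have := hBsum l 1 1
    rw [hBentry M1 l 1]
    simp only [hM1def, Matrix.of_apply]
    linarith [hBsum l 1 1]
  have a : ∀ l : Fin 3, (N * M1 * Nᵀ) l 2 = -((N * M2 * Nᵀ) l 1) := by
    intro l
    rw [hBentry M1 l 2, hBentry M2 l 1]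
    simp only [hM1def, hM2def, Matrix.of_apply]
    linarith [hBsum l 1 2]
  -- rewrite goal in terms of traces and entries
  have g1 : (∑ i : Fin 3, pder n x i 1 i) = Matrix.trace M1 := by
    simp [Matrix.trace, Matrix.diag, M1]
  have g2 : (∑ i : Fin 3, ∑ j : Fin 3, pder n x i 1 j * pder n x j 1 i)
      = Matrix.trace (M1 * M1) := by
    simp [Matrix.trace, Matrix.diag, Matrix.mul_apply, M1]
  have e11 : (∑ i : Fin 3, ∑ j : Fin 3, n 2 x i * n 0 x j * pder n x i 1 j)
      = (N * M1 * Nᵀ) 2 0 := (hBentry M1 2 0).symm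
  have e33 : (∑ i : Fin 3, ∑ j : Fin 3, n 0 x i * n 1 x j * pder n x i 2 j)
      = (N * M2 * Nᵀ) 0 1 := (hBentry M2 0 1).symm
  have e31 : (∑ i : Fin 3, ∑ j : Fin 3, n 2 x i * n 1 x j * pder n x i 2 j)
      = (N * M2 * Nᵀ) 2 1 := (hBentry M2 2 1).symm
  have e13 : (∑ i : Fin 3, ∑ j : Fin 3, n 0 x i * n 0 x j * pder n x i 1 j)
      = (N * M1 * Nᵀ) 0 0 := (hBentry M1 0 0).symm
  rw [g1, g2, e11, e33, e31, e13, t1, t2]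
  set P : Matrix (Fin 3) (Fin 3) ℝ := N * M1 * Nᵀ with hP
  set Q : Matrix (Fin 3) (Fin 3) ℝ := N * M2 * Nᵀ with hQ
  have z0 : P 0 1 = 0 := z 0
  have z1 : P 1 1 = 0 := z 1
  have z2 : P 2 1 = 0 := z 2
  have a0 : P 0 2 = -(Q 0 1) := a 0
  have a1 : P 1 2 = -(Q 1 1) := a 1
  have a2 : P 2 2 = -(Q 2 1) := a 2
  simp only [Matrix.trace, Matrix.diag_apply, Matrix.mul_apply, Fin.sum_univ_three]
  rw [z0, z1, z2, a0, a1, a2]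
  ring
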